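/- For every p ∈ ℝ one has sup_{a∈ℝ} ( p·a − 𝒞(a) ) = 2(cosh p − 1), and conversely for every a ∈ ℝ one has 𝒞(a) = sup_{p∈ℝ} ( a·p − 2(cosh p − 1) ). -/

import Mathlib

/-- `𝒞(a) := ∫₀ᵃ arcsinh(t/2) dt`. -/
noncomputable def Ccost (a : ℝ) : ℝ := ∫ t in (0:ℝ)..a, Real.arsinh (t / 2)

lemma deriv_aux (t : ℝ) :
    HasDerivAt (fun t : ℝ => t * Real.arsinh (t/2) - 2 * Real.sqrt (1 + (t/2)^2))
      (Real.arsinh (t/2)) t := by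
  have hpos : 0 < 1 + (t/2)^2 := by positivity
  have hs : 0 < Real.sqrt (1 + (t/2)^2) := Real.sqrt_pos.mpr hpos
  have hhalf : HasDerivAt (fun t : ℝ => t / 2) (1/2) t := (hasDerivAt_id t).div_const 2
  have h1 : HasDerivAt (fun t : ℝ => Real.arsinh (t/2))
      ((Real.sqrt (1 + (t/2)^2))⁻¹ * (1/2)) t :=
    by have := (Real.hasDerivAt_arsinh (t/2)).comp t hhalf; exact this
  have h2 : HasDerivAt (fun t : ℝ => t * Real.arsinh (t/2))
      (1 * Real.arsinh (t/2) + t * ((Real.sqrt (1 + (t/2)^2))⁻¹ * (1/2))) t :=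
    (hasDerivAt_id t).mul h1
  have h3 : HasDerivAt (fun t : ℝ => 1 + (t/2)^2) (t/2) t := by
    have := (hhalf.pow 2).const_add (1:ℝ)
    exact this.congr_deriv (by push_cast; ring)
    -- derivative: 2 * (t/2)^1 * (1/2) = t/2
  have h4 : HasDerivAt (fun t : ℝ => Real.sqrt (1 + (t/2)^2))
      (1 / (2 * Real.sqrt (1 + (t/2)^2)) * (t/2)) t :=
    (Real.hasDerivAt_sqrt (ne_of_gt hpos)).comp t h3
  have h5 := h2.sub (h4.const_mul 2)
  refine h5.congr_deriv ?_
  field_simp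
  ring

lemma Ccost_eq (a : ℝ) :
    Ccost a = a * Real.arsinh (a/2) - 2 * Real.sqrt (1 + (a/2)^2) + 2 := by
  have hcont : Continuous fun t : ℝ => Real.arsinh (t/2) :=
    Real.continuous_arsinh.comp (continuous_id.div_const 2)
  have := intervalIntegral.integral_eq_sub_of_hasDerivAt
    (f := fun t : ℝ => t * Real.arsinh (t/2) - 2 * Real.sqrt (1 + (t/2)^2))
    (fun t _ => deriv_aux t) (hcont.intervalIntegrable 0 a)
  rw [Ccost, this]
  simp [Real.arsinh_zero]

lemma cosh_tangent (p q : ℝ) : Real.cosh q + (p - q) * Real.sinh q ≤ Real.cosh p := by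
  set u := p - q with hu
  have hp : p = q + u := by rw [hu]; ring
  rw [hp, Real.cosh_add]
  have e1 : Real.cosh u - Real.sinh u = Real.exp (-u) := Real.cosh_sub_sinh u
  have e2 : Real.cosh u + Real.sinh u = Real.exp u := Real.cosh_add_sinh u
  have l1 : -u + 1 ≤ Real.exp (-u) := Real.add_one_le_exp (-u)
  have l2 : u + 1 ≤ Real.exp u := Real.add_one_le_exp u
  have hcu : 1 ≤ Real.cosh u := Real.one_le_cosh u
  have h1 : Real.sinh u - u ≤ Real.cosh u - 1 := by linarith
  have h2 : u - Real.sinh u ≤ Real.cosh u - 1 := by linarith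
  have hcq : Real.cosh q ^ 2 = Real.sinh q ^ 2 + 1 := Real.cosh_sq q
  have hcqpos : 0 < Real.cosh q := Real.cosh_pos q
  have habs : |Real.sinh q| ≤ Real.cosh q := by
    rw [abs_le]
    constructor <;> nlinarith [sq_nonneg (Real.cosh q + Real.sinh q), sq_nonneg (Real.cosh q - Real.sinh q)]
  have hb1 : Real.sinh q ≤ Real.cosh q := le_of_abs_le habs
  have hb2 : -Real.cosh q ≤ Real.sinh q := neg_le_of_abs_le habs
  rcases le_or_gt 0 (Real.sinh q) with h | h
  · nlinarith [mul_nonneg h (by linarith : (0:ℝ) ≤ Real.sinh u - u + (Real.cosh u - 1)),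
      mul_nonneg (by linarith : (0:ℝ) ≤ Real.cosh q - Real.sinh q) (by linarith : (0:ℝ) ≤ Real.cosh u - 1)]
  · nlinarith [mul_nonneg (by linarith : (0:ℝ) ≤ -Real.sinh q) (by linarith : (0:ℝ) ≤ u - Real.sinh u + (Real.cosh u - 1)),
      mul_nonneg (by linarith : (0:ℝ) ≤ Real.cosh q + Real.sinh q) (by linarith : (0:ℝ) ≤ Real.cosh u - 1)]

lemma key_ineq (p x : ℝ) : p * x - Ccost x ≤ 2 * (Real.cosh p - 1) := by
  set q := Real.arsinh (x/2) with hq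
  have hx : Real.sinh q = x / 2 := Real.sinh_arsinh (x/2)
  have hc : Real.cosh q = Real.sqrt (1 + (x/2)^2) := by
    rw [hq, Real.cosh_arsinh]
  rw [Ccost_eq, ← hq, ← hc]
  have ht := cosh_tangent p q
  have e1 : p * Real.sinh q = p * x / 2 := by rw [hx]; ring
  have e2 : q * Real.sinh q = q * x / 2 := by rw [hx]; ring
  nlinarith [ht, e1, e2]

/-- The Legendre dual of `𝒞` is `p ↦ 2(cosh p − 1)`, and conversely `𝒞` is the
Legendre dual of `p ↦ 2(cosh p − 1)`. -/
theorem Ccost_legendre_dual :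
    (∀ p : ℝ, (⨆ a : ℝ, (p * a - Ccost a)) = 2 * (Real.cosh p - 1)) ∧
    (∀ a : ℝ, Ccost a = ⨆ p : ℝ, (a * p - 2 * (Real.cosh p - 1))) := by
  constructor
  · intro p
    have hbdd : BddAbove (Set.range fun a : ℝ => p * a - Ccost a) :=
      ⟨2 * (Real.cosh p - 1), by rintro _ ⟨a, rfl⟩; exact key_ineq p a⟩
    apply le_antisymm
    · exact ciSup_le (key_ineq p)
    · have hval : p * (2 * Real.sinh p) - Ccost (2 * Real.sinh p) = 2 * (Real.cosh p - 1) := by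
        rw [Ccost_eq]
        have h1 : (2 * Real.sinh p) / 2 = Real.sinh p := by ring
        rw [h1, Real.arsinh_sinh]
        have h2 : Real.sqrt (1 + Real.sinh p ^ 2) = Real.cosh p := by
          rw [show (1 : ℝ) + Real.sinh p ^ 2 = Real.cosh p ^ 2 by rw [Real.cosh_sq p]; ring,
            Real.sqrt_sq (Real.cosh_pos p).le]
        rw [h2]; ring
      calc 2 * (Real.cosh p - 1) = p * (2 * Real.sinh p) - Ccost (2 * Real.sinh p) := hval.symm
        _ ≤ ⨆ a : ℝ, (p * a - Ccost a) := le_ciSup hbdd (2 * Real.sinh p)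
  · intro a
    have hkey : ∀ p : ℝ, a * p - 2 * (Real.cosh p - 1) ≤ Ccost a := by
      intro p
      have := key_ineq p a
      linarith [this, mul_comm a p]
    have hbdd : BddAbove (Set.range fun p : ℝ => a * p - 2 * (Real.cosh p - 1)) :=
      ⟨Ccost a, by rintro _ ⟨p, rfl⟩; exact hkey p⟩
    apply le_antisymm
    · have hval : a * Real.arsinh (a/2) - 2 * (Real.cosh (Real.arsinh (a/2)) - 1) = Ccost a := by
        rw [Real.cosh_arsinh, Ccost_eq]; ring
      calc Ccost a = a * Real.arsinh (a/2) - 2 * (Real.cosh (Real.arsinh (a/2)) - 1) := hval.symm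
        _ ≤ _ := le_ciSup hbdd (Real.arsinh (a/2))
    · exact ciSup_le hkey
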